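/- Let X be a real Banach space and Φ : X → ℝ ∪ {+∞} a proper, lower semicontinuous, convex function. For x ∈ dom Φ, ε ≥ 0, and v ∈ X, define the directional ε-derivative Φ'_ε(x; v) := inf_{t>0} (Φ(x + t v) − Φ(x) + ε)/t. Then for fixed x ∈ dom Φ and v ∈ X, the function ε ↦ Φ'_ε(x; v) is non-decreasing and right-continuous on [0, ∞), and moreover continuous at every ε₀ > 0 where its value is finite. -/

import Mathlib

open Set Topology Filter

/-- Directional ε-derivative `Φ'_ε(x;v) = inf_{t>0} (Φ(x+tv) − Φ(x) + ε)/t`, where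
`c = Φ(x)` is the (finite) real value of `Φ` at `x`. -/
noncomputable def dirDeriv {X : Type*} [NormedAddCommGroup X] [NormedSpace ℝ X]
    (Φ : X → EReal) (x v : X) (c : ℝ) (ε : ℝ) : EReal :=
  ⨅ t ∈ Set.Ioi (0 : ℝ), (((t⁻¹ : ℝ) : EReal) * Φ (x + t • v) + (((ε - c) / t : ℝ) : EReal))

namespace DirDerivAux

/-- Auxiliary: if `a ≤ b + δ` for all positive real `δ`, then `a ≤ b`. -/
lemma ereal_le_of_forall_add {a b : EReal} (h : ∀ δ : ℝ, 0 < δ → a ≤ b + (δ : EReal)) :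
    a ≤ b := by
  induction b using EReal.rec with
  | bot => simpa [EReal.bot_add] using h 1 one_pos
  | coe y =>
      refine le_of_forall_gt_imp_ge_of_dense fun d hd => ?_
      obtain ⟨z, hyz, hzd⟩ := EReal.exists_between_coe_real hd
      have hz : (0 : ℝ) < z - y := by
        have := EReal.coe_lt_coe_iff.1 hyz
        linarith
      refine (h (z - y) hz).trans ?_
      rw [← EReal.coe_add]
      have hzz : (y + (z - y) : ℝ) = z := by ring
      rw [hzz]
      exact le_of_lt hzd
  | top => exact le_top

/-- Auxiliary: if every real number below `a` is `≤ b`, then `a ≤ b`. -/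
lemma ereal_le_of_forall_real_lt {a b : EReal}
    (h : ∀ r : ℝ, (r : EReal) < a → (r : EReal) ≤ b) : a ≤ b := by
  by_contra hab
  push_neg at hab
  obtain ⟨r, hbr, hra⟩ := EReal.exists_between_coe_real hab
  exact absurd (h r hra) (not_le.2 hbr)

variable {X : Type*} [NormedAddCommGroup X] [NormedSpace ℝ X]

/-- One term in the infimum defining `dirDeriv`. -/
noncomputable def term (Φ : X → EReal) (x v : X) (c : ℝ) (ε t : ℝ) : EReal :=
  ((t⁻¹ : ℝ) : EReal) * Φ (x + t • v) + (((ε - c) / t : ℝ) : EReal)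

lemma dirDeriv_eq (Φ : X → EReal) (x v : X) (c ε : ℝ) :
    dirDeriv Φ x v c ε = ⨅ t ∈ Set.Ioi (0 : ℝ), term Φ x v c ε t := rfl

lemma term_shift (Φ : X → EReal) (x v : X) (c : ℝ) {t : ℝ} (ht : (0 : ℝ) < t) (ε₀ ε₁ : ℝ) :
    term Φ x v c ε₁ t = term Φ x v c ε₀ t + (((ε₁ - ε₀) / t : ℝ) : EReal) := by
  unfold term
  rw [add_assoc, ← EReal.coe_add]
  congr 2
  field_simp
  ring

lemma dd_mono (Φ : X → EReal) (x v : X) (c : ℝ) : Monotone (dirDeriv Φ x v c) := by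
  intro a b hab
  rw [dirDeriv_eq, dirDeriv_eq]
  refine iInf₂_mono fun t ht => ?_
  unfold term
  refine add_le_add_right ?_ _
  rw [EReal.coe_le_coe_iff]
  have ht' : (0 : ℝ) < t := ht
  gcongr

lemma dd_le_term (Φ : X → EReal) (x v : X) (c ε : ℝ) {t : ℝ} (ht : t ∈ Set.Ioi (0 : ℝ)) :
    dirDeriv Φ x v c ε ≤ term Φ x v c ε t := by
  rw [dirDeriv_eq]
  exact iInf₂_le t ht

/-- The key right-continuity identity. -/
lemma sInf_image_Ioi (Φ : X → EReal) (x v : X) (c : ℝ) (ε₀ : ℝ) :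
    sInf ((fun ε => dirDeriv Φ x v c ε) '' Set.Ioi ε₀) = dirDeriv Φ x v c ε₀ := by
  apply le_antisymm
  · conv_rhs => rw [dirDeriv_eq]
    refine le_iInf₂ fun t ht => ?_
    have ht' : (0 : ℝ) < t := ht
    refine ereal_le_of_forall_add fun δ hδ => ?_
    have hεlt : ε₀ < ε₀ + δ * t := by nlinarith
    have h1 : sInf ((fun ε => dirDeriv Φ x v c ε) '' Set.Ioi ε₀)
        ≤ dirDeriv Φ x v c (ε₀ + δ * t) :=
      sInf_le ⟨ε₀ + δ * t, hεlt, rfl⟩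
    refine h1.trans ((dd_le_term Φ x v c (ε₀ + δ * t) ht).trans ?_)
    rw [term_shift Φ x v c ht' ε₀ (ε₀ + δ * t)]
    have hδt : (ε₀ + δ * t - ε₀) / t = δ := by field_simp; ring
    rw [hδt]
  · refine le_sInf ?_
    rintro b ⟨ε, hε, rfl⟩
    exact dd_mono Φ x v c (le_of_lt hε)

lemma tendsto_right (Φ : X → EReal) (x v : X) (c : ℝ) (ε₀ : ℝ) :
    Tendsto (fun ε => dirDeriv Φ x v c ε) (𝓝[>] ε₀) (𝓝 (dirDeriv Φ x v c ε₀)) := by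
  have := (dd_mono Φ x v c).tendsto_nhdsGT ε₀
  rwa [sInf_image_Ioi] at this

lemma cwa_Ici (Φ : X → EReal) (x v : X) (c : ℝ) (ε₀ : ℝ) :
    ContinuousWithinAt (fun ε : ℝ => dirDeriv Φ x v c ε) (Set.Ici ε₀) ε₀ := by
  rw [← Set.Ioi_insert, continuousWithinAt_insert_self]
  exact tendsto_right Φ x v c ε₀

end DirDerivAux

theorem stmt0 {X : Type*} [NormedAddCommGroup X] [NormedSpace ℝ X] [CompleteSpace X]
    (Φ : X → EReal)
    (hproper : ∃ z, Φ z ≠ ⊤) (hbot : ∀ z, Φ z ≠ ⊥)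
    (hconv : ∀ x y : X, ∀ t : ℝ, 0 ≤ t → t ≤ 1 →
      Φ (t • x + (1 - t) • y) ≤ ((t : ℝ) : EReal) * Φ x + (((1 - t : ℝ)) : EReal) * Φ y)
    (hlsc : LowerSemicontinuous Φ)
    (x v : X) (c : ℝ) (hx : Φ x = (c : EReal)) :
    (∀ ε₀ ε₁ : ℝ, 0 ≤ ε₀ → ε₀ ≤ ε₁ → dirDeriv Φ x v c ε₀ ≤ dirDeriv Φ x v c ε₁) ∧
    (∀ ε₀ : ℝ, 0 ≤ ε₀ →
      ContinuousWithinAt (fun ε : ℝ => dirDeriv Φ x v c ε) (Set.Ici ε₀) ε₀) ∧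
    (∀ ε₀ : ℝ, 0 < ε₀ → dirDeriv Φ x v c ε₀ ≠ ⊤ → dirDeriv Φ x v c ε₀ ≠ ⊥ →
      ContinuousAt (fun ε : ℝ => dirDeriv Φ x v c ε) ε₀) := by
  open DirDerivAux in
  refine ⟨fun ε₀ ε₁ _ h => DirDerivAux.dd_mono Φ x v c h,
    fun ε₀ _ => DirDerivAux.cwa_Ici Φ x v c ε₀, ?_⟩
  intro ε₀ hε₀ hT hB
  set m : ℝ := (dirDeriv Φ x v c ε₀).toReal with hm_def
  have hm : dirDeriv Φ x v c ε₀ = (m : EReal) := (EReal.coe_toReal hT hB).symm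
  -- lower semicontinuity along the ray
  have hlt : ((c - ε₀ / 4 : ℝ) : EReal) < Φ x := by
    rw [hx, EReal.coe_lt_coe_iff]; linarith
  have hray : Continuous fun t : ℝ => x + t • v :=
    continuous_const.add (continuous_id.smul continuous_const)
  have hray0 : Tendsto (fun t : ℝ => x + t • v) (𝓝 0) (𝓝 x) := by
    have h := hray.tendsto 0
    simpa using h
  have hev : ∀ᶠ t in 𝓝 (0 : ℝ), ((c - ε₀ / 4 : ℝ) : EReal) < Φ (x + t • v) :=
    hray0.eventually (hlsc x _ hlt)
  obtain ⟨τ₁, hτ₁pos, hτ₁⟩ := Metric.eventually_nhds_iff.1 hev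
  -- choose the threshold τ
  set M : ℝ := |m| + 1 with hM_def
  have hMpos : 0 < M := by positivity
  have hmM : m < M := by
    have := le_abs_self m
    simp only [hM_def]; linarith
  set τ : ℝ := min (τ₁ / 2) (ε₀ / (2 * M)) with hτ_def
  have hτpos : 0 < τ := lt_min (by linarith) (by positivity)
  have hτ1 : τ < τ₁ := lt_of_le_of_lt (min_le_left _ _) (by linarith)
  have hτ2 : τ ≤ ε₀ / (2 * M) := min_le_right _ _
  have hMτ : M * τ ≤ ε₀ / 2 := by
    have h := hτ2
    rw [le_div_iff₀ (by positivity : (0:ℝ) < 2 * M)] at h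
    nlinarith
  -- left limit equals the value
  have hsup : sSup ((fun ε => dirDeriv Φ x v c ε) '' Set.Iio ε₀) = dirDeriv Φ x v c ε₀ := by
    apply le_antisymm
    · refine sSup_le ?_
      rintro b ⟨ε, hε, rfl⟩
      exact DirDerivAux.dd_mono Φ x v c (le_of_lt hε)
    · refine DirDerivAux.ereal_le_of_forall_real_lt fun r hr => ?_
      have hrm : r < m := by
        rw [hm, EReal.coe_lt_coe_iff] at hr; exact hr
      set r₂ : ℝ := (r + m) / 2 with hr₂_def
      have hrr₂ : r < r₂ := by simp only [hr₂_def]; linarith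
      have hr₂m : r₂ < m := by simp only [hr₂_def]; linarith
      set δ' : ℝ := min (ε₀ / 4) ((m - r₂) * τ) with hδ'_def
      have hδ'pos : 0 < δ' := lt_min (by linarith) (mul_pos (by linarith) hτpos)
      have hδ'1 : δ' ≤ ε₀ / 4 := min_le_left _ _
      have hδ'2 : δ' ≤ (m - r₂) * τ := min_le_right _ _
      set ε : ℝ := ε₀ - δ' with hε_def
      have hεlt : ε < ε₀ := by simp only [hε_def]; linarith
      -- lower bound for each term at ε
      have hterm : ∀ t : ℝ, t ∈ Set.Ioi (0 : ℝ) →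
          (r₂ : EReal) ≤ DirDerivAux.term Φ x v c ε t := by
        intro t ht
        have ht' : (0 : ℝ) < t := ht
        rcases le_or_gt τ t with hcase | hcase
        · -- large t : use the value at ε₀
          have h1 : (m : EReal) ≤ DirDerivAux.term Φ x v c ε₀ t := by
            rw [← hm]; exact DirDerivAux.dd_le_term Φ x v c ε₀ ht
          have h2 : DirDerivAux.term Φ x v c ε t
              = DirDerivAux.term Φ x v c ε₀ t + (((ε - ε₀) / t : ℝ) : EReal) :=
            DirDerivAux.term_shift Φ x v c ht' ε₀ ε
          have hreal : r₂ ≤ m + (ε - ε₀) / t := by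
            have h3 : (ε₀ - ε) / t ≤ (ε₀ - ε) / τ := by
              gcongr
            have h4 : (ε₀ - ε) / τ ≤ m - r₂ := by
              rw [div_le_iff₀ hτpos]
              have hee : ε₀ - ε = δ' := by simp only [hε_def]; ring
              rw [hee]
              exact hδ'2
            have h5 : (ε - ε₀) / t = -((ε₀ - ε) / t) := by ring
            rw [h5]
            linarith
          calc (r₂ : EReal) ≤ ((m + (ε - ε₀) / t : ℝ) : EReal) := EReal.coe_le_coe_iff.2 hreal
            _ = (m : EReal) + (((ε - ε₀) / t : ℝ) : EReal) := EReal.coe_add _ _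
            _ ≤ DirDerivAux.term Φ x v c ε₀ t + (((ε - ε₀) / t : ℝ) : EReal) :=
                add_le_add_left h1 _
            _ = DirDerivAux.term Φ x v c ε t := h2.symm
        · -- small t : use lower semicontinuity
          have hdist : dist t (0 : ℝ) < τ₁ := by
            rw [Real.dist_eq, sub_zero, abs_of_pos ht']
            linarith
          have hΦ : ((c - ε₀ / 4 : ℝ) : EReal) < Φ (x + t • v) := hτ₁ hdist
          have hmul : ((t⁻¹ : ℝ) : EReal) * ((c - ε₀ / 4 : ℝ) : EReal)
              ≤ ((t⁻¹ : ℝ) : EReal) * Φ (x + t • v) := by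
            apply mul_le_mul_of_nonneg_left (le_of_lt hΦ)
            have hnn : (0 : ℝ) ≤ t⁻¹ := le_of_lt (inv_pos.2 ht')
            exact_mod_cast hnn
          have hreal : r₂ ≤ t⁻¹ * (c - ε₀ / 4) + (ε - c) / t := by
            have heq : t⁻¹ * (c - ε₀ / 4) + (ε - c) / t = (ε - ε₀ / 4) / t := by
              field_simp
              ring
            rw [heq, le_div_iff₀ ht']
            have hMt : M * t ≤ M * τ := by nlinarith
            have hr₂t : r₂ * t ≤ M * t := by nlinarith
            have h6 : ε₀ / 2 ≤ ε - ε₀ / 4 := by simp only [hε_def]; linarith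
            exact le_trans hr₂t (le_trans hMt (le_trans hMτ h6))
          calc (r₂ : EReal)
              ≤ ((t⁻¹ * (c - ε₀ / 4) + (ε - c) / t : ℝ) : EReal) :=
                EReal.coe_le_coe_iff.2 hreal
            _ = ((t⁻¹ * (c - ε₀ / 4) : ℝ) : EReal) + (((ε - c) / t : ℝ) : EReal) :=
                EReal.coe_add _ _
            _ = ((t⁻¹ : ℝ) : EReal) * ((c - ε₀ / 4 : ℝ) : EReal)
                + (((ε - c) / t : ℝ) : EReal) := by rw [EReal.coe_mul]
            _ ≤ DirDerivAux.term Φ x v c ε t := add_le_add_left hmul _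
      have hfε : (r₂ : EReal) ≤ dirDeriv Φ x v c ε := by
        rw [DirDerivAux.dirDeriv_eq]
        exact le_iInf₂ hterm
      have hmem : dirDeriv Φ x v c ε ∈ (fun ε => dirDeriv Φ x v c ε) '' Set.Iio ε₀ :=
        ⟨ε, hεlt, rfl⟩
      calc (r : EReal) ≤ (r₂ : EReal) := EReal.coe_le_coe_iff.2 (le_of_lt hrr₂)
        _ ≤ dirDeriv Φ x v c ε := hfε
        _ ≤ sSup ((fun ε => dirDeriv Φ x v c ε) '' Set.Iio ε₀) := le_sSup hmem
  have htl : Tendsto (fun ε => dirDeriv Φ x v c ε) (𝓝[<] ε₀) (𝓝 (dirDeriv Φ x v c ε₀)) := by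
    have := (DirDerivAux.dd_mono Φ x v c).tendsto_nhdsLT ε₀
    rwa [hsup] at this
  have hIic : ContinuousWithinAt (fun ε : ℝ => dirDeriv Φ x v c ε) (Set.Iic ε₀) ε₀ := by
    rw [← Set.Iio_insert, continuousWithinAt_insert_self]
    exact htl
  have hIci := DirDerivAux.cwa_Ici Φ x v c ε₀
  rw [← continuousWithinAt_univ, ← Set.Iic_union_Ici (a := ε₀)]
  exact hIic.union hIci
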